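/- Let ℓ divide p-1 and q-1, let 0 ≤ k ≤ ℓ-1, and let D be the (k+2)×(k+2) matrix over ℂ[x,y] with D_{1,1} = y^{j-k(q-1)/ℓ}, D_{1,k+2} = x^{p-i+(ℓ-1-k)(p-1)/ℓ} y, D_{t+1,t} = -x^{(p-1)/ℓ} and D_{t,t} = y^{(q-1)/ℓ} for 2 ≤ t ≤ k+1 (subdiagonal/diagonal pattern), D_{k+2,k+1} = -x^{i-(ℓ-1)(p-1)/ℓ}, D_{k+2,k+2} = x y^{q-j}, and all other entries 0. Then det D = x^p y + x y^q. In particular D · adj(D) = (x^p y + x y^q) · Id, so (D, adj(D)) is a matrix factorisation of the loop polynomial. -/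

import Mathlib

open MvPolynomial

/-- The matrix `D` (the even differential of the matrix factorisation `K_{0,i,j}` of the
loop polynomial) has determinant `x^p y + x y^q`; in particular
`D ⬝ adj(D) = (x^p y + x y^q) • 1`, so `(D, adj D)` is a matrix factorisation. -/
theorem loop_matrix_factorisation_det (p q ℓ i j k : ℕ) (hp : 2 ≤ p) (hq : 2 ≤ q)
    (hℓ : 1 ≤ ℓ) (hℓp : ℓ ∣ p - 1) (hℓq : ℓ ∣ q - 1)
    (hi1 : p - (p - 1) / ℓ ≤ i) (hi2 : i ≤ p - 1) (hj1 : 1 ≤ j) (hj2 : j ≤ q - 1)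
    (hk : k = (j - 1) * ℓ / (q - 1)) (hkℓ : k ≤ ℓ - 1)
    (D : Matrix (Fin (k + 2)) (Fin (k + 2)) (MvPolynomial (Fin 2) ℂ))
    (hD : D = Matrix.of fun s t : Fin (k + 2) =>
      if (s : ℕ) = 0 ∧ (t : ℕ) = 0 then (X 1 : MvPolynomial (Fin 2) ℂ) ^ (j - k * ((q - 1) / ℓ))
      else if (s : ℕ) = 0 ∧ (t : ℕ) = k + 1 then
        X 0 ^ (p - i + (ℓ - 1 - k) * ((p - 1) / ℓ)) * X 1
      else if (s : ℕ) = (t : ℕ) ∧ 1 ≤ (s : ℕ) ∧ (s : ℕ) ≤ k then X 1 ^ ((q - 1) / ℓ)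
      else if (s : ℕ) = (t : ℕ) + 1 ∧ (s : ℕ) ≤ k then -(X 0 ^ ((p - 1) / ℓ))
      else if (s : ℕ) = k + 1 ∧ (t : ℕ) = k then -(X 0 ^ (i - (ℓ - 1) * ((p - 1) / ℓ)))
      else if (s : ℕ) = k + 1 ∧ (t : ℕ) = k + 1 then X 0 * X 1 ^ (q - j)
      else 0) :
    D.det = X 0 ^ p * X 1 + X 0 * X 1 ^ q ∧
    D * D.adjugate = ((X 0 ^ p * X 1 + X 0 * X 1 ^ q : MvPolynomial (Fin 2) ℂ)) • (1 : Matrix (Fin (k + 2)) (Fin (k + 2)) (MvPolynomial (Fin 2) ℂ)) := by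
  obtain ⟨a, ha⟩ := hℓp
  obtain ⟨b, hb⟩ := hℓq
  have hℓ0 : 0 < ℓ := hℓ
  have hpa : (p - 1) / ℓ = a := by rw [ha, Nat.mul_div_cancel_left _ hℓ0]
  have hqb : (q - 1) / ℓ = b := by rw [hb, Nat.mul_div_cancel_left _ hℓ0]
  have hb0 : 0 < b := by
    rcases Nat.eq_zero_or_pos b with h | h
    · subst h; simp at hb; omega
    · exact h
  have hk' : k = (j - 1) / b := by
    rw [hk, hb, mul_comm (j - 1) ℓ, Nat.mul_div_mul_left _ _ hℓ0]
  have hkb : k * b ≤ j - 1 := by rw [hk']; exact Nat.div_mul_le_self _ _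
  have hyexp : (j - k * b) + (k * b + (q - j)) = q := by
    obtain ⟨B, hB⟩ : ∃ B, k * b = B := ⟨_, rfl⟩
    rw [hB] at hkb ⊢
    omega
  have hℓk : ℓ - 1 - k + k = ℓ - 1 := by omega
  have hE : (ℓ - 1 - k) * a + k * a = (ℓ - 1) * a := by rw [← add_mul, hℓk]
  have hva : (ℓ - 1) * a + a = p - 1 := by
    have h2 : ℓ - 1 + 1 = ℓ := by omega
    calc (ℓ - 1) * a + a = (ℓ - 1 + 1) * a := by ring
    _ = ℓ * a := by rw [h2]
    _ = p - 1 := ha.symm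
  have hi1' : p - a ≤ i := by rwa [hpa] at hi1
  have hxexp : (p - i + (ℓ - 1 - k) * a) + (k * a + (i - (ℓ - 1) * a)) = p := by
    obtain ⟨A, hA⟩ : ∃ A, (ℓ - 1 - k) * a = A := ⟨_, rfl⟩
    obtain ⟨B, hB⟩ : ∃ B, k * a = B := ⟨_, rfl⟩
    obtain ⟨C, hC⟩ : ∃ C, (ℓ - 1) * a = C := ⟨_, rfl⟩
    rw [hA, hB, hC] at hE ⊢
    rw [hC] at hva
    omega
  subst hD
  set M : Matrix (Fin (k + 2)) (Fin (k + 2)) (MvPolynomial (Fin 2) ℂ) :=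
    Matrix.of fun s t : Fin (k + 2) =>
      if (s : ℕ) = 0 ∧ (t : ℕ) = 0 then (X 1 : MvPolynomial (Fin 2) ℂ) ^ (j - k * ((q - 1) / ℓ))
      else if (s : ℕ) = 0 ∧ (t : ℕ) = k + 1 then
        X 0 ^ (p - i + (ℓ - 1 - k) * ((p - 1) / ℓ)) * X 1
      else if (s : ℕ) = (t : ℕ) ∧ 1 ≤ (s : ℕ) ∧ (s : ℕ) ≤ k then X 1 ^ ((q - 1) / ℓ)
      else if (s : ℕ) = (t : ℕ) + 1 ∧ (s : ℕ) ≤ k then -(X 0 ^ ((p - 1) / ℓ))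
      else if (s : ℕ) = k + 1 ∧ (t : ℕ) = k then -(X 0 ^ (i - (ℓ - 1) * ((p - 1) / ℓ)))
      else if (s : ℕ) = k + 1 ∧ (t : ℕ) = k + 1 then X 0 * X 1 ^ (q - j)
      else 0 with hM
  have hMe : ∀ s t : Fin (k + 2), M s t =
      (if (s : ℕ) = 0 ∧ (t : ℕ) = 0 then (X 1 : MvPolynomial (Fin 2) ℂ) ^ (j - k * b)
      else if (s : ℕ) = 0 ∧ (t : ℕ) = k + 1 then
        X 0 ^ (p - i + (ℓ - 1 - k) * a) * X 1
      else if (s : ℕ) = (t : ℕ) ∧ 1 ≤ (s : ℕ) ∧ (s : ℕ) ≤ k then X 1 ^ b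
      else if (s : ℕ) = (t : ℕ) + 1 ∧ (s : ℕ) ≤ k then -(X 0 ^ a)
      else if (s : ℕ) = k + 1 ∧ (t : ℕ) = k then -(X 0 ^ (i - (ℓ - 1) * a))
      else if (s : ℕ) = k + 1 ∧ (t : ℕ) = k + 1 then X 0 * X 1 ^ (q - j)
      else 0) := by
    intro s t
    rw [hM]
    simp only [Matrix.of_apply, hpa, hqb]
  -- the two minors
  have hminor0 : (M.submatrix Fin.succ Fin.succ).det =
      X 1 ^ (k * b) * (X 0 * X 1 ^ (q - j)) := by
    rw [Matrix.det_of_lowerTriangular]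
    · rw [Fin.prod_univ_castSucc]
      have h1 : ∀ s : Fin k,
          (M.submatrix Fin.succ Fin.succ) s.castSucc s.castSucc = X 1 ^ b := by
        intro s
        rw [Matrix.submatrix_apply, hMe]
        rw [if_neg (by (try simp only [Fin.val_succ, Fin.coe_castSucc, Fin.val_last, true_and, and_true]); all_goals first | trivial | omega), if_neg (by (try simp only [Fin.val_succ, Fin.coe_castSucc, Fin.val_last, true_and, and_true]); all_goals first | trivial | omega),
          if_pos (by (try simp only [Fin.val_succ, Fin.coe_castSucc, Fin.val_last, true_and, and_true]); all_goals first | trivial | omega)]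
      have h2 : (M.submatrix Fin.succ Fin.succ) (Fin.last k) (Fin.last k)
          = X 0 * X 1 ^ (q - j) := by
        rw [Matrix.submatrix_apply, hMe]
        rw [if_neg (by (try simp only [Fin.val_succ, Fin.coe_castSucc, Fin.val_last, true_and, and_true]); all_goals first | trivial | omega), if_neg (by (try simp only [Fin.val_succ, Fin.coe_castSucc, Fin.val_last, true_and, and_true]); all_goals first | trivial | omega),
          if_neg (by (try simp only [Fin.val_succ, Fin.coe_castSucc, Fin.val_last, true_and, and_true]); all_goals first | trivial | omega), if_neg (by (try simp only [Fin.val_succ, Fin.coe_castSucc, Fin.val_last, true_and, and_true]); all_goals first | trivial | omega),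
          if_neg (by (try simp only [Fin.val_succ, Fin.coe_castSucc, Fin.val_last, true_and, and_true]); all_goals first | trivial | omega), if_pos (by (try simp only [Fin.val_succ, Fin.coe_castSucc, Fin.val_last, true_and, and_true]); all_goals first | trivial | omega)]
      rw [Finset.prod_congr rfl (fun s _ => h1 s), h2, Finset.prod_const,
        Finset.card_univ, Fintype.card_fin, ← pow_mul, mul_comm b k]
    · intro s t hst
      rw [OrderDual.toDual_lt_toDual] at hst
      have hst' : (s : ℕ) < (t : ℕ) := hst
      rw [Matrix.submatrix_apply, hMe]
      simp only [Fin.val_succ]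
      rw [if_neg (by omega), if_neg (by omega), if_neg (by omega), if_neg (by omega),
        if_neg (by omega), if_neg (by omega)]
  have hminorlast : (M.submatrix Fin.succ Fin.castSucc).det =
      (-1) ^ (k + 1) * (X 0 ^ (k * a) * X 0 ^ (i - (ℓ - 1) * a)) := by
    rw [Matrix.det_of_upperTriangular]
    · rw [Fin.prod_univ_castSucc]
      have h1 : ∀ s : Fin k,
          (M.submatrix Fin.succ Fin.castSucc) s.castSucc s.castSucc = -(X 0 ^ a) := by
        intro s
        rw [Matrix.submatrix_apply, hMe]
        rw [if_neg (by (try simp only [Fin.val_succ, Fin.coe_castSucc, Fin.val_last, true_and, and_true]); all_goals first | trivial | omega), if_neg (by (try simp only [Fin.val_succ, Fin.coe_castSucc, Fin.val_last, true_and, and_true]); all_goals first | trivial | omega),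
          if_neg (by (try simp only [Fin.val_succ, Fin.coe_castSucc, Fin.val_last, true_and, and_true]); all_goals first | trivial | omega), if_pos (by (try simp only [Fin.val_succ, Fin.coe_castSucc, Fin.val_last, true_and, and_true]); all_goals first | trivial | omega)]
      have h2 : (M.submatrix Fin.succ Fin.castSucc) (Fin.last k) (Fin.last k)
          = -(X 0 ^ (i - (ℓ - 1) * a)) := by
        rw [Matrix.submatrix_apply, hMe]
        rw [if_neg (by (try simp only [Fin.val_succ, Fin.coe_castSucc, Fin.val_last, true_and, and_true]); all_goals first | trivial | omega), if_neg (by (try simp only [Fin.val_succ, Fin.coe_castSucc, Fin.val_last, true_and, and_true]); all_goals first | trivial | omega),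
          if_neg (by (try simp only [Fin.val_succ, Fin.coe_castSucc, Fin.val_last, true_and, and_true]); all_goals first | trivial | omega), if_neg (by (try simp only [Fin.val_succ, Fin.coe_castSucc, Fin.val_last, true_and, and_true]); all_goals first | trivial | omega),
          if_pos (by (try simp only [Fin.val_succ, Fin.coe_castSucc, Fin.val_last, true_and, and_true]); all_goals first | trivial | omega)]
      rw [Finset.prod_congr rfl (fun s _ => h1 s), h2, Finset.prod_const,
        Finset.card_univ, Fintype.card_fin]
      rw [neg_pow, ← pow_mul, mul_comm a k]
      ring
    · intro s t hst
      have hst' : (t : ℕ) < (s : ℕ) := hst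
      rw [Matrix.submatrix_apply, hMe]
      simp only [Fin.val_succ, Fin.coe_castSucc]
      rw [if_neg (by omega), if_neg (by omega), if_neg (by omega), if_neg (by omega),
        if_neg (by omega), if_neg (by omega)]
  have hM00 : M 0 0 = X 1 ^ (j - k * b) := by
    rw [hMe]
    rw [if_pos (by simp)]
  have hM0l : M 0 (Fin.last (k + 1)) = X 0 ^ (p - i + (ℓ - 1 - k) * a) * X 1 := by
    rw [hMe]
    rw [if_neg (by simp [Fin.val_last]), if_pos (by simp [Fin.val_last])]
  have hdet : M.det = X 0 ^ p * X 1 + X 0 * X 1 ^ q := by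
    rw [Matrix.det_succ_row_zero]
    rw [Finset.sum_eq_add_of_mem (0 : Fin (k + 2)) (Fin.last (k + 1))
      (Finset.mem_univ _) (Finset.mem_univ _)
      (by simp [Fin.ext_iff, Fin.val_last])
      (by
        intro c _ hc
        have hc0 : (c : ℕ) ≠ 0 := fun h => hc.1 (Fin.ext (by simpa using h))
        have hcl : (c : ℕ) ≠ k + 1 := fun h => hc.2 (Fin.ext (by simpa [Fin.val_last] using h))
        have hM0c : M 0 c = 0 := by
          rw [hMe]
          simp only [Fin.val_zero]
          split_ifs <;> first | rfl | omega | (rename_i h; exact h.1.elim) |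
            (rename_i h; exact absurd h.2 hc0) | (rename_i h; exact absurd h.2 hcl)
        rw [hM0c, mul_zero, zero_mul])]
    rw [Fin.succAbove_zero, Fin.succAbove_last, hM00, hM0l, hminor0, hminorlast]
    simp only [Fin.val_zero, Fin.val_last, pow_zero, one_mul]
    have hy : (X 1 : MvPolynomial (Fin 2) ℂ) ^ (j - k * b) *
        (X 1 ^ (k * b) * (X 0 * X 1 ^ (q - j))) = X 0 * X 1 ^ q := by
      have h : (X 1 : MvPolynomial (Fin 2) ℂ) ^ q = X 1 ^ ((j - k * b) + (k * b + (q - j))) := by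
        rw [hyexp]
      rw [h]; ring
    have hx : (-1 : MvPolynomial (Fin 2) ℂ) ^ (k + 1) *
        (X 0 ^ (p - i + (ℓ - 1 - k) * a) * X 1) *
        ((-1) ^ (k + 1) * (X 0 ^ (k * a) * X 0 ^ (i - (ℓ - 1) * a))) = X 0 ^ p * X 1 := by
      have hsq : ((-1 : MvPolynomial (Fin 2) ℂ) ^ (k + 1)) * ((-1) ^ (k + 1)) = 1 := by
        rw [← pow_add, ← two_mul, pow_mul, neg_one_sq, one_pow]
      calc (-1 : MvPolynomial (Fin 2) ℂ) ^ (k + 1) * (X 0 ^ (p - i + (ℓ - 1 - k) * a) * X 1) *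
            ((-1) ^ (k + 1) * (X 0 ^ (k * a) * X 0 ^ (i - (ℓ - 1) * a)))
          = ((-1) ^ (k + 1) * (-1) ^ (k + 1)) *
            (X 0 ^ (p - i + (ℓ - 1 - k) * a) * (X 0 ^ (k * a) * X 0 ^ (i - (ℓ - 1) * a)) * X 1) := by
            ring
        _ = X 0 ^ p * X 1 := by
            rw [hsq, one_mul]
            have h : (X 0 : MvPolynomial (Fin 2) ℂ) ^ p =
                X 0 ^ ((p - i + (ℓ - 1 - k) * a) + (k * a + (i - (ℓ - 1) * a))) := by
              rw [hxexp]
            rw [h]; ring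
    rw [hy, hx]
    ring
  exact ⟨hdet, by rw [Matrix.mul_adjugate, hdet]⟩
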